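/- A subspace X of the Sorgenfrey line is metrizable if and only if X is countable. -/

import Mathlib

open Set Topology

/-- The Hattori topology on ℝ: points of `A` have Euclidean neighborhood base
`(x-ε, x+ε)`, points outside `A` have Sorgenfrey neighborhood base `[x, x+ε)`. -/
def hattori (A : Set ℝ) : TopologicalSpace ℝ where
  IsOpen U := ∀ x ∈ U, ∃ ε > (0 : ℝ),
    (x ∈ A → Ioo (x - ε) (x + ε) ⊆ U) ∧ (x ∉ A → Ico x (x + ε) ⊆ U)
  isOpen_univ := fun x _ => ⟨1, one_pos, fun _ => subset_univ _, fun _ => subset_univ _⟩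
  isOpen_inter := by
    intro U V hU hV x hx
    obtain ⟨ε₁, hε₁, h₁, h₁'⟩ := hU x hx.1
    obtain ⟨ε₂, hε₂, h₂, h₂'⟩ := hV x hx.2
    have l1 := min_le_left ε₁ ε₂
    have l2 := min_le_right ε₁ ε₂
    refine ⟨min ε₁ ε₂, lt_min hε₁ hε₂, fun hA => ?_, fun hA => ?_⟩
    · intro y hy
      exact ⟨h₁ hA ⟨by linarith [hy.1], by linarith [hy.2]⟩,
             h₂ hA ⟨by linarith [hy.1], by linarith [hy.2]⟩⟩
    · intro y hy
      exact ⟨h₁' hA ⟨hy.1, by linarith [hy.2]⟩, h₂' hA ⟨hy.1, by linarith [hy.2]⟩⟩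
  isOpen_sUnion := by
    intro S hS x hx
    obtain ⟨U, hU, hxU⟩ := hx
    obtain ⟨ε, hε, h, h'⟩ := hS U hU x hxU
    exact ⟨ε, hε, fun hA => (h hA).trans (subset_sUnion_of_mem hU),
      fun hA => (h' hA).trans (subset_sUnion_of_mem hU)⟩

/-- The Sorgenfrey (lower limit) topology on ℝ. -/
def sorgenfrey : TopologicalSpace ℝ :=
  TopologicalSpace.generateFrom {S | ∃ a b : ℝ, S = Ico a b}

lemma sorg_isOpen_iff {U : Set ℝ} :
    IsOpen[sorgenfrey] U ↔ ∀ x ∈ U, ∃ b, x < b ∧ Ico x b ⊆ U := by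
  constructor
  · intro h
    have h' : TopologicalSpace.GenerateOpen {S | ∃ a b : ℝ, S = Ico a b} U := h
    induction h' with
    | basic s hs =>
        rintro x hx
        obtain ⟨a, b, rfl⟩ := hs
        exact ⟨b, hx.2, fun y hy => ⟨le_trans hx.1 hy.1, hy.2⟩⟩
    | univ => exact fun x _ => ⟨x + 1, by linarith, fun y _ => trivial⟩
    | inter U V hU hV ihU ihV =>
        intro x hx
        obtain ⟨b₁, hb₁, h₁⟩ := ihU hU x hx.1
        obtain ⟨b₂, hb₂, h₂⟩ := ihV hV x hx.2
        exact ⟨min b₁ b₂, lt_min hb₁ hb₂, fun y hy =>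
          ⟨h₁ ⟨hy.1, lt_of_lt_of_le hy.2 (min_le_left _ _)⟩,
           h₂ ⟨hy.1, lt_of_lt_of_le hy.2 (min_le_right _ _)⟩⟩⟩
    | sUnion S hS ih =>
        intro x hx
        obtain ⟨t, ht, hxt⟩ := hx
        obtain ⟨b, hb, hsub⟩ := ih t ht (hS t ht) x hxt
        exact ⟨b, hb, hsub.trans (subset_sUnion_of_mem ht)⟩
  · intro h
    choose! b hb hsub using h
    have hU : U = ⋃₀ ((fun x => Ico x (b x)) '' U) := by
      ext y
      constructor
      · intro hy
        exact ⟨Ico y (b y), ⟨y, hy, rfl⟩, le_refl y, hb y hy⟩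
      · rintro ⟨s, ⟨x, hx, rfl⟩, hy⟩
        exact hsub x hx hy
    rw [hU]
    exact TopologicalSpace.GenerateOpen.sUnion _
      (by rintro s ⟨x, hx, rfl⟩; exact .basic _ ⟨x, b x, rfl⟩)

lemma sorg_Ico_open (a b : ℝ) : IsOpen[sorgenfrey] (Ico a b) :=
  TopologicalSpace.GenerateOpen.basic _ ⟨a, b, rfl⟩

lemma sorg_Ici_open (a : ℝ) : IsOpen[sorgenfrey] (Ici a) :=
  sorg_isOpen_iff.mpr fun x hx =>
    ⟨x + 1, by linarith, fun y hy => le_trans hx hy.1⟩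

lemma sorg_Iio_open (a : ℝ) : IsOpen[sorgenfrey] (Iio a) :=
  sorg_isOpen_iff.mpr fun x hx => ⟨a, hx, fun _ hy => hy.2⟩

lemma sorg_Ioi_open (a : ℝ) : IsOpen[sorgenfrey] (Ioi a) :=
  sorg_isOpen_iff.mpr fun x hx => ⟨x + 1, by linarith, fun y hy => lt_of_lt_of_le hx hy.1⟩

lemma sorg_Ico_closed (a b : ℝ) : IsClosed[sorgenfrey] (Ico a b) := by
  letI : TopologicalSpace ℝ := sorgenfrey
  have hcomp : (Ico a b)ᶜ = Iio a ∪ Ici b := by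
    ext y
    simp only [mem_compl_iff, mem_Ico, mem_union, mem_Iio, mem_Ici, not_and_or, not_le, not_lt]
  have h : IsOpen (Iio a ∪ Ici b) := (sorg_Iio_open a).union (sorg_Ici_open b)
  rw [← isOpen_compl_iff, hcomp]
  exact h

lemma metrizable_of_countable (X : Set ℝ) (hX : X.Countable) :
    @TopologicalSpace.MetrizableSpace X
      (TopologicalSpace.induced ((↑) : X → ℝ) sorgenfrey) := by
  letI : TopologicalSpace ℝ := sorgenfrey
  letI tX : TopologicalSpace X := TopologicalSpace.induced ((↑) : X → ℝ) sorgenfrey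
  have hopen : ∀ U : Set X, IsOpen U ↔
      ∃ V : Set ℝ, IsOpen V ∧ ((↑) : X → ℝ) ⁻¹' V = U := fun U => isOpen_induced_iff
  -- T1
  haveI : T1Space X := by
    refine ⟨fun x => ?_⟩
    rw [← isOpen_compl_iff]
    rw [hopen]
    refine ⟨Iio (x : ℝ) ∪ Ioi (x : ℝ), (sorg_Iio_open _).union (sorg_Ioi_open _), ?_⟩
    ext z
    simp only [mem_preimage, mem_union, mem_Iio, mem_Ioi, mem_compl_iff, mem_singleton_iff]
    constructor
    · rintro (h | h) rfl <;> exact lt_irrefl _ h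
    · intro h
      rcases lt_or_gt_of_ne (fun he : (z : ℝ) = x => h (Subtype.ext he)) with h' | h'
      · exact Or.inl h'
      · exact Or.inr h'
  -- Regular
  haveI : RegularSpace X := by
    apply RegularSpace.of_exists_mem_nhds_isClosed_subset
    intro x s hs
    obtain ⟨U, hUs, hU, hxU⟩ := mem_nhds_iff.mp hs
    obtain ⟨V, hV, rfl⟩ := (hopen U).mp hU
    obtain ⟨b, hb, hIco⟩ := sorg_isOpen_iff.mp hV (x : ℝ) hxU
    refine ⟨((↑) : X → ℝ) ⁻¹' Ico (x : ℝ) b, ?_, ?_, fun z hz => hUs (hIco hz)⟩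
    · exact IsOpen.mem_nhds ((hopen _).mpr ⟨_, sorg_Ico_open _ _, rfl⟩) ⟨le_refl _, hb⟩
    · have : IsClosed (Ico (x : ℝ) b) := sorg_Ico_closed _ _
      rw [← isOpen_compl_iff] at this ⊢
      rw [hopen]
      exact ⟨(Ico (x : ℝ) b)ᶜ, this, rfl⟩
  -- Second countable
  haveI : SecondCountableTopology X := by
    haveI := hX.to_subtype
    refine TopologicalSpace.IsTopologicalBasis.secondCountableTopology
      (b := (fun p : X × ℚ => ((↑) : X → ℝ) ⁻¹' Ico (p.1 : ℝ) (p.2 : ℝ)) '' univ) ?_ ?_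
    · refine TopologicalSpace.isTopologicalBasis_of_isOpen_of_nhds ?_ ?_
      · rintro u ⟨⟨a, q⟩, -, rfl⟩
        exact (hopen _).mpr ⟨_, sorg_Ico_open _ _, rfl⟩
      · intro a u ha hu
        obtain ⟨V, hV, rfl⟩ := (hopen u).mp hu
        obtain ⟨b, hb, hIco⟩ := sorg_isOpen_iff.mp hV (a : ℝ) ha
        obtain ⟨q, hq1, hq2⟩ := exists_rat_btwn hb
        refine ⟨((↑) : X → ℝ) ⁻¹' Ico (a : ℝ) q, ⟨(a, q), mem_univ _, rfl⟩,
          ⟨le_refl _, hq1⟩, fun z hz => ?_⟩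
        exact hIco ⟨hz.1, lt_trans hz.2 hq2⟩
    · exact (countable_univ : (univ : Set (X × ℚ)).Countable).image _
  haveI : T0Space X := inferInstance
  haveI : T3Space X := ⟨⟩
  exact TopologicalSpace.metrizableSpace_of_t3_secondCountable X

lemma countable_of_metric {α : Type} [m : MetricSpace α] (f : α → ℝ)
    (hf : Function.Injective f)
    (hm : (UniformSpace.toTopologicalSpace : TopologicalSpace α) =
      TopologicalSpace.induced f sorgenfrey) :
    Countable α := by
  classical
  have hopen : ∀ U : Set α, IsOpen U ↔
      ∃ V : Set ℝ, IsOpen[sorgenfrey] V ∧ f ⁻¹' V = U := by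
    intro U
    rw [hm]
    exact Iff.rfl
  set R : Set α := {x : α | ∃ q : ℚ, f x < q ∧ ∀ z : α, ¬(f x < f z ∧ f z < q)} with hRdef
  have hR : R.Countable := by
    have hsel : ∀ x : α, ∃ q : ℚ, x ∈ R →
        f x < q ∧ ∀ z : α, ¬(f x < f z ∧ f z < q) := by
      intro x
      by_cases hx : x ∈ R
      · obtain ⟨q, hq⟩ := hx
        exact ⟨q, fun _ => hq⟩
      · exact ⟨0, fun h => absurd h hx⟩
    choose g hg using hsel
    refine MapsTo.countable_of_injOn (t := (univ : Set ℚ)) (f := g) (fun x _ => mem_univ _) ?_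
      countable_univ
    intro x hx y hy hxy
    by_contra hne
    obtain ⟨hgx1, hgx2⟩ := hg x hx
    obtain ⟨hgy1, hgy2⟩ := hg y hy
    rcases lt_or_gt_of_ne (fun he : f x = f y => hne (hf he)) with h | h
    · exact hgx2 y ⟨h, by rw [hxy]; exact hgy1⟩
    · exact hgy2 x ⟨h, by rw [← hxy]; exact hgx1⟩
  set S : ℕ → Set α := fun n => {y : α | ∀ z : α, f z < f y → 1 / (n + 1 : ℝ) ≤ dist z y}
    with hSdef
  have hcover : (univ : Set α) ⊆ R ∪ ⋃ n, (S n \ R) := by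
    rintro y -
    by_cases hyR : y ∈ R
    · exact Or.inl hyR
    · refine Or.inr (mem_iUnion.mpr ?_)
      have hP : IsOpen {z : α | f y ≤ f z} := by
        rw [hopen]
        exact ⟨Ici (f y), sorg_Ici_open _, rfl⟩
      obtain ⟨r, hr, hball⟩ := Metric.isOpen_iff.mp hP y (le_refl (f y))
      obtain ⟨n, hn⟩ := exists_nat_one_div_lt hr
      refine ⟨n, ?_, hyR⟩
      intro z hz
      by_contra hlt
      push_neg at hlt
      have hzb : z ∈ Metric.ball y r := lt_trans hlt hn
      exact absurd (hball hzb) (not_le.mpr hz)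
  have key : ∀ (n : ℕ) (y : α), ∃ pq : ℚ × ℚ, y ∈ S n \ R →
      (∃ w : α, (pq.1 : ℝ) < f w ∧ f w < pq.2) ∧
      ∀ w : α, (pq.1 : ℝ) < f w → f w < pq.2 → dist w y < 1 / (2 * (n + 1 : ℝ)) := by
    intro n y
    by_cases hy : y ∈ S n \ R
    swap
    · exact ⟨(0, 0), fun h => absurd h hy⟩
    have hρ : (0 : ℝ) < 1 / (2 * (n + 1 : ℝ)) := by positivity
    have hb : IsOpen (Metric.ball y (1 / (2 * (n + 1 : ℝ)))) := Metric.isOpen_ball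
    obtain ⟨V, hV, hVb⟩ := (hopen _).mp hb
    have hyV : f y ∈ V := by
      have : y ∈ Metric.ball y (1 / (2 * (n + 1 : ℝ))) := Metric.mem_ball_self hρ
      rw [← hVb] at this
      exact this
    obtain ⟨b, hfb, hIco⟩ := sorg_isOpen_iff.mp hV (f y) hyV
    have hyR : ∀ q : ℚ, f y < q → ∃ z : α, f y < f z ∧ f z < q := by
      intro q hq
      by_contra hcon
      push_neg at hcon
      exact hy.2 ⟨q, hq, fun z hz => absurd hz.2 (not_lt.mpr (hcon z hz.1))⟩
    obtain ⟨q₀, hq₀1, hq₀2⟩ := exists_rat_btwn hfb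
    obtain ⟨z, hz1, hz2⟩ := hyR q₀ hq₀1
    obtain ⟨p, hp1, hp2⟩ := exists_rat_btwn hz1
    obtain ⟨q, hq1, hq2⟩ := exists_rat_btwn hz2
    refine ⟨(p, q), fun _ => ⟨⟨z, hp2, hq1⟩, ?_⟩⟩
    intro w hw1 hw2
    have hwV : f w ∈ V := hIco ⟨le_of_lt (lt_trans hp1 hw1),
      lt_trans (lt_trans hw2 (by exact_mod_cast hq2)) hq₀2⟩
    have : w ∈ Metric.ball y (1 / (2 * (n + 1 : ℝ))) := by
      rw [← hVb]
      exact hwV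
    exact Metric.mem_ball.mp this
  choose F hF using key
  have hSc : ∀ n : ℕ, (S n \ R).Countable := by
    intro n
    refine MapsTo.countable_of_injOn (t := (univ : Set (ℚ × ℚ))) (f := F n)
      (fun x _ => mem_univ _) ?_ countable_univ
    intro y₁ hy₁ y₂ hy₂ heq
    by_contra hne
    obtain ⟨⟨w, hw1, hw2⟩, hclose1⟩ := hF n y₁ hy₁
    obtain ⟨-, hclose2⟩ := hF n y₂ hy₂
    have d1 : dist w y₁ < 1 / (2 * (n + 1 : ℝ)) := hclose1 w hw1 hw2
    have d2 : dist w y₂ < 1 / (2 * (n + 1 : ℝ)) := by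
      refine hclose2 w ?_ ?_
      · rw [← heq]; exact hw1
      · rw [← heq]; exact hw2
    have htri : dist y₁ y₂ ≤ dist w y₁ + dist w y₂ := by
      calc dist y₁ y₂ ≤ dist y₁ w + dist w y₂ := dist_triangle _ _ _
      _ = dist w y₁ + dist w y₂ := by rw [dist_comm y₁ w]
    have hsum : 1 / (2 * ((n : ℝ) + 1)) + 1 / (2 * ((n : ℝ) + 1)) = 1 / ((n : ℝ) + 1) := by
      rw [← add_div, mul_comm, div_eq_div_iff (by positivity) (by positivity)]
      ring
    have hd : dist y₁ y₂ < 1 / ((n : ℝ) + 1) := by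
      rw [← hsum]
      linarith
    rcases lt_or_gt_of_ne (fun he : f y₁ = f y₂ => hne (hf he)) with h | h
    · have := hy₂.1 y₁ h
      linarith
    · have := hy₁.1 y₂ h
      rw [dist_comm] at this
      linarith
  have huniv : (univ : Set α).Countable :=
    Set.Countable.mono hcover (hR.union (countable_iUnion hSc))
  exact countable_univ_iff.mp huniv

theorem stmt9 (X : Set ℝ) :
    @TopologicalSpace.MetrizableSpace X
        (TopologicalSpace.induced ((↑) : X → ℝ) sorgenfrey) ↔
      X.Countable := by
  constructor
  · intro h
    obtain ⟨m, hm⟩ : ∃ m : MetricSpace X, m.toUniformSpace.toTopologicalSpace =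
        TopologicalSpace.induced ((↑) : X → ℝ) sorgenfrey :=
      ⟨@TopologicalSpace.metrizableSpaceMetric X
        (TopologicalSpace.induced ((↑) : X → ℝ) sorgenfrey) h, rfl⟩
    have hc : Countable X :=
      countable_of_metric (α := X) (m := m) ((↑) : X → ℝ) Subtype.val_injective hm
    exact Set.countable_coe_iff.mp hc
  · intro hX
    exact metrizable_of_countable X hX
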